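/- Let Γ and Γ' be groups such that the monoid semirings ℕ[Γ] and ℕ[Γ'] (with convolution product) are isomorphic as semirings. Then Γ and Γ' are isomorphic as groups. -/

import Mathlib

private lemma sum_eq_one {G : Type*} (a : G →₀ ℕ) (h : (a.sum fun _ n => n) = 1) :
    ∃ g, a = Finsupp.single g 1 := by
  classical
  have hne : a ≠ 0 := by
    rintro rfl; simp [Finsupp.sum] at h
  obtain ⟨g, hg⟩ := Finsupp.ne_iff.mp hne
  simp only [Finsupp.coe_zero, Pi.zero_apply] at hg
  have hmem : g ∈ a.support := Finsupp.mem_support_iff.mpr hg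
  refine ⟨g, ?_⟩
  have hle : ∀ x ∈ a.support, a x ≤ 1 := by
    intro x hx
    calc a x ≤ a.sum fun _ n => n := Finset.single_le_sum (fun _ _ => Nat.zero_le _) hx
    _ = 1 := h
  have hag : a g = 1 := le_antisymm (hle g hmem) (Nat.one_le_iff_ne_zero.mpr hg)
  ext x
  rcases eq_or_ne x g with rfl | hxg
  · simp [hag]
  · rw [Finsupp.single_eq_of_ne hxg]
    by_contra hx
    have hxm : x ∈ a.support := Finsupp.mem_support_iff.mpr hx
    have : a g + a x ≤ a.sum fun _ n => n := by
      rw [Finsupp.sum]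
      have := Finset.add_sum_erase a.support a hxm
      calc a g + a x ≤ ∑ y ∈ a.support, a y := by
            rw [← Finset.add_sum_erase a.support a hmem]
            have hxm' : x ∈ a.support.erase g := Finset.mem_erase.mpr ⟨hxg, hxm⟩
            exact Nat.add_le_add_left (Finset.single_le_sum (fun _ _ => Nat.zero_le _) hxm') _
        _ = a.sum fun _ n => n := rfl
    omega

private lemma unit_is_single {G : Type*} [Group G] (a b : MonoidAlgebra ℕ G)
    (hab : a * b = 1) : ∃ g, a = MonoidAlgebra.of ℕ G g := by
  let ε : MonoidAlgebra ℕ G →ₐ[ℕ] ℕ := MonoidAlgebra.lift ℕ ℕ G 1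
  have hmul : ε a * ε b = 1 := by rw [← map_mul, hab, map_one]
  have ha1 : ε a = 1 := Nat.eq_one_of_mul_eq_one_right hmul
  have hεa : (a.coeff.sum fun _ n => n) = 1 := by
    have := MonoidAlgebra.lift_apply (R := ℕ) (A := ℕ) (1 : G →* ℕ) a
    simp only [MonoidHom.one_apply, smul_eq_mul, mul_one] at this
    rw [← this]; exact ha1
  obtain ⟨g, hg⟩ := sum_eq_one a.coeff hεa
  exact ⟨g, MonoidAlgebra.ext hg⟩

private lemma exists_of {Γ Γ' : Type*} [Group Γ] [Group Γ']
    (e : MonoidAlgebra ℕ Γ ≃+* MonoidAlgebra ℕ Γ') (g : Γ) :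
    ∃ g', e (MonoidAlgebra.of ℕ Γ g) = MonoidAlgebra.of ℕ Γ' g' := by
  have : e (MonoidAlgebra.of ℕ Γ g) * e (MonoidAlgebra.of ℕ Γ g⁻¹) = 1 := by
    rw [← map_mul, ← map_mul, mul_inv_cancel, map_one, map_one]
  exact unit_is_single _ _ this

/-- If the monoid semirings `ℕ[Γ]` and `ℕ[Γ']` of two groups (finitely supported
`ℕ`-valued functions with convolution product) are isomorphic as semirings, then
the groups are isomorphic. -/
theorem stmt_0 {Γ Γ' : Type*} [Group Γ] [Group Γ']
    (e : MonoidAlgebra ℕ Γ ≃+* MonoidAlgebra ℕ Γ') :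
    Nonempty (Γ ≃* Γ') := by
  classical
  let f : Γ → Γ' := fun g => (exists_of e g).choose
  let f' : Γ' → Γ := fun g' => (exists_of e.symm g').choose
  have hf : ∀ g, e (MonoidAlgebra.of ℕ Γ g) = MonoidAlgebra.of ℕ Γ' (f g) :=
    fun g => (exists_of e g).choose_spec
  have hf' : ∀ g', e.symm (MonoidAlgebra.of ℕ Γ' g') = MonoidAlgebra.of ℕ Γ (f' g') :=
    fun g' => (exists_of e.symm g').choose_spec
  have hofinj : Function.Injective (MonoidAlgebra.of ℕ Γ) := fun x y h => by
    simpa using (MonoidAlgebra.single_left_injective (one_ne_zero)) h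
  have hofinj' : Function.Injective (MonoidAlgebra.of ℕ Γ') := fun x y h => by
    simpa using (MonoidAlgebra.single_left_injective (one_ne_zero)) h
  refine ⟨{ toFun := f, invFun := f', left_inv := ?_, right_inv := ?_, map_mul' := ?_ }⟩
  · intro g
    apply hofinj
    rw [← hf' (f g), ← hf g, RingEquiv.symm_apply_apply]
  · intro g'
    apply hofinj'
    rw [← hf (f' g'), ← hf' g', RingEquiv.apply_symm_apply]
  · intro x y
    apply hofinj'
    rw [← hf (x * y), map_mul, map_mul, hf, hf, ← map_mul]
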